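/- Let G be a proper interval graph on {1,…,n} with positive integer vertex weights W satisfying W(v) ≤ C for every vertex v, where C is a positive integer. If the weight-expanded graph WXP(G), regarded as a proper interval graph under the lexicographic order on copies ((u,s) < (v,t) iff u < v, or u = v and s < t), has a [λ,C]-block partition, then G has a weighted [2λ,C]-partition. -/

import Mathlib

/-- Reachability inside a set `S`: there is a walk from `u` to `v` all of whose
vertices lie in `S`. -/
def ReachIn {α : Type*} (G : SimpleGraph α) (S : Set α) (u v : α) : Prop :=
  Relation.ReflTransGen (fun a b => G.Adj a b ∧ a ∈ S ∧ b ∈ S) u v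

/-- The subgraph induced by `S` is connected. -/
def ConnectedIn {α : Type*} (G : SimpleGraph α) (S : Set α) : Prop :=
  ∀ u ∈ S, ∀ v ∈ S, ReachIn G S u v

/-- `G` is a graph on the vertex set `{1,…,n}`. -/
def OnRange (n : ℕ) (G : SimpleGraph ℕ) : Prop :=
  ∀ u v : ℕ, G.Adj u v → u ∈ Set.Icc 1 n ∧ v ∈ Set.Icc 1 n

/-- The umbrella property characterising proper interval graphs. -/
def Umbrella (G : SimpleGraph ℕ) : Prop :=
  ∀ u v w : ℕ, u < v → v < w → G.Adj u w → G.Adj u v ∧ G.Adj v w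

/-- `Ps` is a partition of the vertex set `{1,…,n}`. -/
def IsPartitionOf (n : ℕ) (Ps : Set (Set ℕ)) : Prop :=
  (∀ P ∈ Ps, P.Nonempty) ∧ Ps.PairwiseDisjoint id ∧ ⋃₀ Ps = Set.Icc 1 n

/-- A `[λ,C]`-partition of the graph `G` on `{1,…,n}`: every part induces a
connected subgraph, every part has at most `C` vertices, and every clique
meets at most `L` parts. -/
def IsLCPartition (n : ℕ) (G : SimpleGraph ℕ) (L C : ℕ) (Ps : Set (Set ℕ)) : Prop :=
  IsPartitionOf n Ps ∧ (∀ P ∈ Ps, ConnectedIn G P ∧ P.ncard ≤ C) ∧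
    ∀ K : Set ℕ, G.IsClique K → {P ∈ Ps | (P ∩ K).Nonempty}.ncard ≤ L

/-- A block: a set of consecutive vertices `{u, u+1, …, v}` with `1 ≤ u ≤ v`. -/
def IsBlockSet (P : Set ℕ) : Prop := ∃ u v : ℕ, 1 ≤ u ∧ u ≤ v ∧ P = Set.Icc u v

/-- A `[λ,C]`-block partition: a `[λ,C]`-partition all of whose parts are blocks. -/
def IsLCBlockPartition (n : ℕ) (G : SimpleGraph ℕ) (L C : ℕ) (Ps : Set (Set ℕ)) : Prop :=
  IsLCPartition n G L C Ps ∧ ∀ P ∈ Ps, IsBlockSet P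

/-- A `[λ,C]`-coloring of the graph `G` on `{1,…,n}` with colors `Fin L`:
every monochromatic component has at most `C` vertices. -/
def IsLCColoring (n : ℕ) (G : SimpleGraph ℕ) (C : ℕ) {L : ℕ} (c : ℕ → Fin L) : Prop :=
  ∀ v ∈ Set.Icc 1 n, {u | ReachIn G {w | c w = c v} v u}.ncard ≤ C

/-- The clique number of `G`. -/
noncomputable def cliqueNumber (G : SimpleGraph ℕ) : ℕ :=
  sSup {m | ∃ s : Finset ℕ, G.IsNClique m s}

/-- The graph `G` on `{1,…,n}` is connected. -/
def ConnectedOn (n : ℕ) (G : SimpleGraph ℕ) : Prop :=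
  ConnectedIn G (Set.Icc 1 n)

/-- The vertex set of the weight-expanded graph: the copies `(v,t)`, `v ∈ {1,…,n}`,
`1 ≤ t ≤ W(v)`. -/
def wxpVerts (n : ℕ) (Wt : ℕ → ℕ) : Set (ℕ × ℕ) :=
  {p : ℕ × ℕ | p.1 ∈ Set.Icc 1 n ∧ p.2 ∈ Set.Icc 1 (Wt p.1)}

/-- The weight-expanded graph `WXP(G)` of a weighted graph on `{1,…,n}`: two
distinct copies are adjacent iff they are copies of the same vertex or copies of
adjacent vertices. -/
def wxpGraph (n : ℕ) (G : SimpleGraph ℕ) (Wt : ℕ → ℕ) : SimpleGraph (ℕ × ℕ) where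
  Adj a b := a ≠ b ∧ a ∈ wxpVerts n Wt ∧ b ∈ wxpVerts n Wt ∧
    (a.1 = b.1 ∨ G.Adj a.1 b.1)
  symm := by
    refine ⟨?_⟩
    rintro a b ⟨h1, h2, h3, h4⟩
    refine ⟨h1.symm, h3, h2, ?_⟩
    cases h4 with
    | inl h => exact Or.inl h.symm
    | inr h => exact Or.inr h.symm
  loopless := ⟨fun a h => h.1 rfl⟩

/-- The lexicographic order on copies. -/
def lexLe (a b : ℕ × ℕ) : Prop := a.1 < b.1 ∨ (a.1 = b.1 ∧ a.2 ≤ b.2)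

/-- A block of `WXP(G)`: a set of vertices of `WXP(G)` that is consecutive in the
lexicographic order (order-convex within the vertex set). -/
def IsLexBlock (n : ℕ) (Wt : ℕ → ℕ) (P : Set (ℕ × ℕ)) : Prop :=
  P ⊆ wxpVerts n Wt ∧
    ∀ a ∈ P, ∀ b ∈ P, ∀ c ∈ wxpVerts n Wt, lexLe a c → lexLe c b → c ∈ P

section Aux

/-- All copies of a vertex `v`. -/
def Copies (Wt : ℕ → ℕ) (v : ℕ) : Set (ℕ × ℕ) :=
  {p | p.1 = v ∧ 1 ≤ p.2 ∧ p.2 ≤ Wt v}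

/-- Vertices all of whose copies lie in `Q`. -/
def SQ (n : ℕ) (Wt : ℕ → ℕ) (Q : Set (ℕ × ℕ)) : Set ℕ :=
  {v | v ∈ Set.Icc 1 n ∧ Copies Wt v ⊆ Q}

lemma cross_adj {G : SimpleGraph ℕ} (humb : Umbrella G) {x y w : ℕ}
    (hxy : G.Adj x y) (hx : x ≤ w) (hy : w + 1 ≤ y) : G.Adj w (w + 1) := by
  rcases eq_or_lt_of_le hx with rfl | hx
  · rcases eq_or_lt_of_le hy with h | h
    · exact h ▸ hxy
    · exact (humb x (x + 1) y (Nat.lt_succ_self x) h hxy).1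
  · have hwy : G.Adj w y := (humb x w y hx (by omega) hxy).2
    rcases eq_or_lt_of_le hy with h | h
    · exact h ▸ hwy
    · exact (humb w (w + 1) y (Nat.lt_succ_self w) h hwy).1

lemma exists_crossing {n : ℕ} {G : SimpleGraph ℕ} {Wt : ℕ → ℕ} {Q : Set (ℕ × ℕ)}
    {w : ℕ} {a b : ℕ × ℕ} (hr : ReachIn (wxpGraph n G Wt) Q a b)
    (hb : w + 1 ≤ b.1) : a.1 ≤ w → ∃ x y, G.Adj x y ∧ x ≤ w ∧ w + 1 ≤ y := by
  induction hr using Relation.ReflTransGen.head_induction_on with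
  | refl => intro ha; omega
  | head hac hcb ih =>
    rename_i a' c'
    intro ha
    by_cases hc : c'.1 ≤ w
    · exact ih hc
    · rcases (show a' ≠ c' ∧ a' ∈ wxpVerts n Wt ∧ c' ∈ wxpVerts n Wt ∧ (a'.1 = c'.1 ∨ G.Adj a'.1 c'.1) from hac.1).2.2.2 with heq | hadj
      · omega
      · exact ⟨a'.1, c'.1, hadj, ha, by omega⟩

lemma connectedIn_of_consec {G : SimpleGraph ℕ} {S : Set ℕ}
    (hconv : ∀ u ∈ S, ∀ v ∈ S, ∀ x, u ≤ x → x ≤ v → x ∈ S)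
    (hadj : ∀ w, w ∈ S → w + 1 ∈ S → G.Adj w (w + 1)) :
    ConnectedIn G S := by
  have key : ∀ d u, u ∈ S → u + d ∈ S → ReachIn G S u (u + d) := by
    intro d
    induction d with
    | zero => exact fun u hu _ => Relation.ReflTransGen.refl
    | succ d ih =>
      intro u hu hv
      have hmid : u + d ∈ S := hconv u hu (u + d + 1) hv (u + d) (by omega) (by omega)
      exact (ih u hu hmid).tail ⟨hadj _ hmid hv, hmid, hv⟩
  intro u hu v hv
  have hsymm : Symmetric (fun a b => G.Adj a b ∧ a ∈ S ∧ b ∈ S) :=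
    fun a b ⟨h1, h2, h3⟩ => ⟨h1.symm, h3, h2⟩
  rcases le_total u v with h | h
  · obtain ⟨d, rfl⟩ := Nat.exists_eq_add_of_le h
    exact key d u hu hv
  · obtain ⟨d, rfl⟩ := Nat.exists_eq_add_of_le h
    haveI : Std.Symm (fun a b => G.Adj a b ∧ a ∈ S ∧ b ∈ S) := ⟨fun a b h => hsymm h⟩
    exact Relation.ReflTransGen.symmetric.symm _ _ (key d v hv hu)

end Aux

/-- if every weight satisfies `W(v) ≤ C` and the weight-expanded
graph `WXP(G)` (a proper interval graph under the lexicographic order) has a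
`[λ,C]`-block partition, then the weighted graph `G` has a weighted
`[2λ,C]`-partition. -/
theorem wxp_blockPartition_to_weighted_partition (n : ℕ) (G : SimpleGraph ℕ)
    (hrange : OnRange n G) (humb : Umbrella G) (Wt : ℕ → ℕ) (L C : ℕ)
    (hL : 0 < L) (hC : 0 < C) (hWt : ∀ v ∈ Set.Icc 1 n, 1 ≤ Wt v ∧ Wt v ≤ C)
    (h : ∃ Qs : Set (Set (ℕ × ℕ)),
      ((∀ P ∈ Qs, P.Nonempty) ∧ Qs.PairwiseDisjoint id ∧ ⋃₀ Qs = wxpVerts n Wt) ∧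
      (∀ P ∈ Qs, ConnectedIn (wxpGraph n G Wt) P ∧ P.ncard ≤ C) ∧
      (∀ K : Set (ℕ × ℕ), (wxpGraph n G Wt).IsClique K →
        {P ∈ Qs | (P ∩ K).Nonempty}.ncard ≤ L) ∧
      (∀ P ∈ Qs, IsLexBlock n Wt P)) :
    ∃ Ps : Set (Set ℕ), IsPartitionOf n Ps ∧
      (∀ P ∈ Ps, ConnectedIn G P ∧ (∑ᶠ v ∈ P, Wt v) ≤ C) ∧
      (∀ K : Set ℕ, G.IsClique K → {P ∈ Ps | (P ∩ K).Nonempty}.ncard ≤ 2 * L) := by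

  classical
  obtain ⟨Qs, ⟨hQne, hQdisj, hQunion⟩, hQcc, hQclique, hQblock⟩ := h
  have hW1 : ∀ v ∈ Set.Icc 1 n, 1 ≤ Wt v := fun v hv => (hWt v hv).1
  have hcop_mem : ∀ v, 1 ≤ Wt v → (v, 1) ∈ Copies Wt v := fun v h => ⟨rfl, le_refl 1, h⟩
  have hVfin : (wxpVerts n Wt).Finite := by
    apply Set.Finite.subset ((Set.finite_Icc 1 n).prod (Set.finite_Icc 1 C))
    rintro ⟨a, b⟩ ⟨h1, h2⟩
    rw [Set.mem_Icc] at h2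
    exact ⟨h1, Set.mem_Icc.2 ⟨h2.1, le_trans h2.2 (hWt a h1).2⟩⟩
  have hQsub : ∀ Q ∈ Qs, Q ⊆ wxpVerts n Wt :=
    fun Q hQ => hQunion ▸ Set.subset_sUnion_of_mem hQ
  have hQsfin : Qs.Finite := by
    apply Set.Finite.subset hVfin.finite_subsets
    intro Q hQ
    exact hQsub Q hQ
  have hQfin : ∀ Q ∈ Qs, Q.Finite := fun Q hQ => hVfin.subset (hQsub Q hQ)
  set SplitS : Set ℕ := {v | v ∈ Set.Icc 1 n ∧ ∀ Q ∈ Qs, ¬ Copies Wt v ⊆ Q} with hSplitS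
  set Ps : Set (Set ℕ) :=
    {P | ∃ Q ∈ Qs, P = SQ n Wt Q ∧ (SQ n Wt Q).Nonempty} ∪ {P | ∃ v ∈ SplitS, P = {v}}
    with hPsdef
  have hSQdisj : ∀ Q1 ∈ Qs, ∀ Q2 ∈ Qs, ∀ v, v ∈ SQ n Wt Q1 → v ∈ SQ n Wt Q2 → Q1 = Q2 := by
    intro Q1 h1 Q2 h2 v hv1 hv2
    by_contra hne
    have h1' : (v, 1) ∈ Q1 := hv1.2 (hcop_mem v (hW1 v hv1.1))
    have h2' : (v, 1) ∈ Q2 := hv2.2 (hcop_mem v (hW1 v hv2.1))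
    exact Set.disjoint_left.mp (hQdisj h1 h2 hne) h1' h2'
  refine ⟨Ps, ⟨?_, ?_, ?_⟩, ?_, ?_⟩
  · -- nonempty
    rintro P (⟨Q, hQ, rfl, hne⟩ | ⟨v, hv, rfl⟩)
    · exact hne
    · exact ⟨v, rfl⟩
  · -- pairwise disjoint
    rintro P1 h1 P2 h2 hne
    simp only [Function.onFun, id]
    rw [Set.disjoint_left]
    intro v hv1 hv2
    rcases h1 with ⟨Q1, hQ1, rfl, -⟩ | ⟨v1, hv1', rfl⟩
    · rcases h2 with ⟨Q2, hQ2, rfl, -⟩ | ⟨v2, hv2', rfl⟩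
      · exact hne (by rw [hSQdisj Q1 hQ1 Q2 hQ2 v hv1 hv2])
      · obtain rfl : v = v2 := hv2
        exact hv2'.2 Q1 hQ1 hv1.2
    · obtain rfl : v = v1 := hv1
      rcases h2 with ⟨Q2, hQ2, rfl, -⟩ | ⟨v2, hv2', rfl⟩
      · exact hv1'.2 Q2 hQ2 hv2.2
      · obtain rfl : v = v2 := hv2
        exact hne rfl
  · -- union
    apply Set.eq_of_subset_of_subset
    · rintro v ⟨P, hP, hvP⟩
      rcases hP with ⟨Q, hQ, rfl, -⟩ | ⟨v1, hv1, rfl⟩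
      · exact hvP.1
      · obtain rfl : v = v1 := hvP
        exact hv1.1
    · intro v hv
      by_cases hs : ∃ Q ∈ Qs, Copies Wt v ⊆ Q
      · obtain ⟨Q, hQ, hsub⟩ := hs
        have hvS : v ∈ SQ n Wt Q := ⟨hv, hsub⟩
        exact ⟨SQ n Wt Q, Or.inl ⟨Q, hQ, rfl, ⟨v, hvS⟩⟩, hvS⟩
      · push_neg at hs
        exact ⟨{v}, Or.inr ⟨v, ⟨hv, hs⟩, rfl⟩, rfl⟩
  · -- connectivity and weight
    rintro P (⟨Q, hQ, rfl, hne⟩ | ⟨v, hv, rfl⟩)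
    · have hblk := hQblock Q hQ
      have hconv : ∀ u ∈ SQ n Wt Q, ∀ w ∈ SQ n Wt Q, ∀ x, u ≤ x → x ≤ w → x ∈ SQ n Wt Q := by
        intro u hu w hw x hux hxw
        have hxI : x ∈ Set.Icc 1 n := Set.mem_Icc.2
          ⟨le_trans (Set.mem_Icc.1 hu.1).1 hux, le_trans hxw (Set.mem_Icc.1 hw.1).2⟩
        refine ⟨hxI, ?_⟩
        rcases eq_or_lt_of_le hux with rfl | hux
        · exact hu.2
        rcases eq_or_lt_of_le hxw with rfl | hxw
        · exact hw.2
        rintro ⟨a, t⟩ ⟨ha, ht1, ht2⟩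
        have ha' : a = x := ha
        subst ha'
        refine hblk.2 (u, 1) (hu.2 (hcop_mem u (hW1 u hu.1))) (w, 1)
          (hw.2 (hcop_mem w (hW1 w hw.1))) (a, t) ⟨hxI, Set.mem_Icc.2 ⟨ht1, ht2⟩⟩
          (Or.inl hux) (Or.inl hxw)
      have hadj : ∀ w, w ∈ SQ n Wt Q → w + 1 ∈ SQ n Wt Q → G.Adj w (w + 1) := by
        intro w hw hw1
        have h1 : (w, 1) ∈ Q := hw.2 (hcop_mem w (hW1 w hw.1))
        have h2 : (w + 1, 1) ∈ Q := hw1.2 (hcop_mem _ (hW1 _ hw1.1))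
        have hr : ReachIn (wxpGraph n G Wt) Q (w, 1) (w + 1, 1) := (hQcc Q hQ).1 _ h1 _ h2
        obtain ⟨x, y, hxy, hx, hy⟩ := exists_crossing hr (le_refl (w + 1)) (le_refl w)
        exact cross_adj humb hxy hx hy
      refine ⟨connectedIn_of_consec hconv hadj, ?_⟩
      have hSfin : (SQ n Wt Q).Finite := (Set.finite_Icc 1 n).subset (fun v hv => hv.1)
      rw [finsum_mem_eq_finite_toFinset_sum _ hSfin]
      have hQf := hQfin Q hQ
      calc ∑ v ∈ hSfin.toFinset, Wt v
          = ∑ v ∈ hSfin.toFinset, ({v} ×ˢ Finset.Icc 1 (Wt v)).card := by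
            apply Finset.sum_congr rfl
            intro v _
            rw [Finset.card_product, Finset.card_singleton, Nat.card_Icc, one_mul]
            omega
        _ = (hSfin.toFinset.biUnion (fun v => {v} ×ˢ Finset.Icc 1 (Wt v))).card := by
            rw [Finset.card_biUnion]
            intro x _ y _ hxy
            rw [Function.onFun, Finset.disjoint_left]
            rintro ⟨a, b⟩ hp hq
            rw [Finset.mem_product, Finset.mem_singleton] at hp hq
            exact hxy (hp.1.symm.trans hq.1)
        _ ≤ hQf.toFinset.card := by
            apply Finset.card_le_card
            intro p hp
            rw [Finset.mem_biUnion] at hp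
            obtain ⟨v, hv, hp⟩ := hp
            rw [Finset.mem_product, Finset.mem_singleton, Finset.mem_Icc] at hp
            rw [Set.Finite.mem_toFinset] at hv ⊢
            exact hv.2 ⟨hp.1, hp.2.1, hp.1 ▸ hp.2.2⟩
        _ = Q.ncard := (Set.ncard_eq_toFinset_card Q hQf).symm
        _ ≤ C := (hQcc Q hQ).2
    · constructor
      · intro u hu w hw
        obtain rfl : u = v := hu
        obtain rfl : w = u := hw
        exact Relation.ReflTransGen.refl
      · rw [finsum_mem_singleton]
        exact (hWt v hv.1).2
  · -- clique bound
    intro K hK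
    set K' : Set (ℕ × ℕ) := {p | p ∈ wxpVerts n Wt ∧ p.1 ∈ K} with hK'def
    have hK'clique : (wxpGraph n G Wt).IsClique K' := by
      intro p hp q hq hpq
      refine ⟨hpq, hp.1, hq.1, ?_⟩
      by_cases hfst : p.1 = q.1
      · exact Or.inl hfst
      · exact Or.inr (hK hp.2 hq.2 hfst)
    set T := {Q ∈ Qs | (Q ∩ K').Nonempty} with hTdef
    have hT : T.ncard ≤ L := hQclique K' hK'clique
    have hTfin : T.Finite := hQsfin.subset (fun Q hQ => hQ.1)
    set A : Set (Set ℕ) := {P | (∃ Q ∈ Qs, P = SQ n Wt Q) ∧ (P ∩ K).Nonempty} with hAdef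
    set B : Set (Set ℕ) := {P | (∃ v ∈ SplitS, P = {v}) ∧ (P ∩ K).Nonempty} with hBdef
    have hcover : {P ∈ Ps | (P ∩ K).Nonempty} ⊆ A ∪ B := by
      rintro P ⟨hP, hne⟩
      rcases hP with ⟨Q, hQ, rfl, -⟩ | ⟨v, hv, rfl⟩
      · exact Or.inl ⟨⟨Q, hQ, rfl⟩, hne⟩
      · exact Or.inr ⟨⟨v, hv, rfl⟩, hne⟩
    have hAfin : A.Finite := by
      apply Set.Finite.subset (hQsfin.image (fun Q => SQ n Wt Q))
      rintro P ⟨⟨Q, hQ, rfl⟩, -⟩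
      exact ⟨Q, hQ, rfl⟩
    have hBfin : B.Finite := by
      apply Set.Finite.subset ((Set.finite_Icc 1 n).image (fun v => ({v} : Set ℕ)))
      rintro P ⟨⟨v, hv, rfl⟩, -⟩
      exact ⟨v, hv.1, rfl⟩
    -- injection for A
    have hA : A.ncard ≤ L := by
      have hmap : ∀ P ∈ A, ∀ (hex : ∃ Q, Q ∈ Qs ∧ P = SQ n Wt Q), hex.choose ∈ T := by
        rintro P ⟨-, hne⟩ hex
        obtain ⟨hQ, hPeq⟩ := hex.choose_spec
        obtain ⟨v, hvP, hvK⟩ := hne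
        rw [hPeq] at hvP
        refine ⟨hQ, ⟨(v, 1), hvP.2 (hcop_mem v (hW1 v hvP.1)), ⟨hvP.1, Set.mem_Icc.2 ⟨le_refl 1, hW1 v hvP.1⟩⟩, hvK⟩⟩
      refine le_trans (Set.ncard_le_ncard_of_injOn
        (fun P => if h : ∃ Q, Q ∈ Qs ∧ P = SQ n Wt Q then h.choose else ∅) ?_ ?_ hTfin) hT
      · intro P hP
        have hex : ∃ Q, Q ∈ Qs ∧ P = SQ n Wt Q := by
          obtain ⟨⟨Q, hQ, rfl⟩, -⟩ := hP
          exact ⟨Q, hQ, rfl⟩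
        simp only [dif_pos hex]
        exact hmap P hP hex
      · intro P1 h1 P2 h2 heq
        have hex1 : ∃ Q, Q ∈ Qs ∧ P1 = SQ n Wt Q := by
          obtain ⟨⟨Q, hQ, rfl⟩, -⟩ := h1
          exact ⟨Q, hQ, rfl⟩
        have hex2 : ∃ Q, Q ∈ Qs ∧ P2 = SQ n Wt Q := by
          obtain ⟨⟨Q, hQ, rfl⟩, -⟩ := h2
          exact ⟨Q, hQ, rfl⟩
        simp only [dif_pos hex1, dif_pos hex2] at heq
        rw [hex1.choose_spec.2, hex2.choose_spec.2, heq]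
    -- injection for B
    have hkey : ∀ Q ∈ Qs, ∀ v1 v2, v1 ∈ SplitS → v2 ∈ SplitS →
        (v1, 1) ∈ Q → (v2, 1) ∈ Q → v1 = v2 := by
      intro Q hQ v1 v2 hs1 hs2 h1 h2
      by_contra hne
      have main : ∀ a b : ℕ, a ∈ SplitS → (a, 1) ∈ Q → (b, 1) ∈ Q → a < b → False := by
        intro a b hsa ha hb hab
        have hnot : ¬ Copies Wt a ⊆ Q := hsa.2 Q hQ
        rw [Set.not_subset] at hnot
        obtain ⟨p, ⟨hp1, hp2, hp3⟩, hpQ⟩ := hnot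
        have hpV : p ∈ wxpVerts n Wt := by
          refine ⟨?_, ?_⟩
          · rw [hp1]; exact hsa.1
          · rw [Set.mem_Icc, hp1]; exact ⟨hp2, hp3⟩
        exact hpQ ((hQblock Q hQ).2 (a, 1) ha (b, 1) hb p hpV
          (Or.inr ⟨hp1.symm, hp2⟩) (Or.inl (by rw [hp1]; exact hab)))
      rcases Nat.lt_or_ge v1 v2 with h | h
      · exact main v1 v2 hs1 h1 h2 h
      · exact main v2 v1 hs2 h2 h1 (by omega)
    have hB : B.ncard ≤ L := by
      have hexB : ∀ P ∈ B, ∃ Q, Q ∈ Qs ∧ ∃ v, v ∈ SplitS ∧ P = {v} ∧ (v, 1) ∈ Q ∧ v ∈ K := by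
        rintro P ⟨⟨v, hv, rfl⟩, hne⟩
        obtain ⟨w, hwP, hwK⟩ := hne
        obtain rfl : w = v := hwP
        have hV : (w, 1) ∈ wxpVerts n Wt := ⟨hv.1, Set.mem_Icc.2 ⟨le_refl 1, hW1 w hv.1⟩⟩
        have : (w, 1) ∈ ⋃₀ Qs := hQunion.symm ▸ hV
        obtain ⟨Q, hQ, hwQ⟩ := this
        exact ⟨Q, hQ, w, hv, rfl, hwQ, hwK⟩
      refine le_trans (Set.ncard_le_ncard_of_injOn
        (fun P => if h : ∃ Q, Q ∈ Qs ∧ ∃ v, v ∈ SplitS ∧ P = {v} ∧ (v, 1) ∈ Q ∧ v ∈ K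
          then h.choose else ∅) ?_ ?_ hTfin) hT
      · intro P hP
        have hex := hexB P hP
        simp only [dif_pos hex]
        obtain ⟨hQ, v, hvS, hPeq, hvQ, hvK⟩ := hex.choose_spec
        refine ⟨hQ, ⟨(v, 1), hvQ, ⟨hvS.1, Set.mem_Icc.2 ⟨le_refl 1, hW1 v hvS.1⟩⟩, hvK⟩⟩
      · intro P1 h1 P2 h2 heq
        have hex1 := hexB P1 h1
        have hex2 := hexB P2 h2
        simp only [dif_pos hex1, dif_pos hex2] at heq
        obtain ⟨hQ1, v1, hv1S, hP1eq, hv1Q, -⟩ := hex1.choose_spec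
        obtain ⟨hQ2, v2, hv2S, hP2eq, hv2Q, -⟩ := hex2.choose_spec
        rw [heq] at hv1Q
        have := hkey hex2.choose hQ2 v1 v2 hv1S hv2S hv1Q hv2Q
        rw [hP1eq, hP2eq, this]
    calc {P ∈ Ps | (P ∩ K).Nonempty}.ncard
        ≤ (A ∪ B).ncard := Set.ncard_le_ncard hcover (hAfin.union hBfin)
      _ ≤ A.ncard + B.ncard := Set.ncard_union_le A B
      _ ≤ L + L := add_le_add hA hB
      _ = 2 * L := by omega
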